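/- Let a > 0 and let γ, ν ∈ ℝ satisfy γ + 1 + ν > 0 and γ + 1 − ν > 0. Define K_ν(x) = (1/2)(x/2)^ν ∫₀^∞ t^{−ν−1} exp(−t − x²/(4t)) dt for x > 0 (the modified Bessel function of the third kind). Then ∫₀^∞ x^γ K_ν(a x) dx = (2^{γ−1} / a^{γ+1}) · Γ((1+γ+ν)/2) · Γ((1+γ−ν)/2). -/

import Mathlib

open MeasureTheory Real

/-- The modified Bessel function of the third kind with index `ν`, defined for `x > 0`
by its integral representation. -/
noncomputable def besselK (ν x : ℝ) : ℝ :=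
  1 / 2 * (x / 2) ^ ν * ∫ t in Set.Ioi (0 : ℝ), t ^ (-ν - 1) * Real.exp (-t - x ^ 2 / (4 * t))

/-- Integral property of the Bessel function:
`∫₀^∞ x^γ K_ν(a x) dx = 2^{γ-1}/a^{γ+1} · Γ((1+γ+ν)/2) · Γ((1+γ-ν)/2)`. -/
theorem besselK_integral (a γ ν : ℝ) (ha : 0 < a)
    (h1 : 0 < γ + 1 + ν) (h2 : 0 < γ + 1 - ν) :
    ∫ x in Set.Ioi (0 : ℝ), x ^ γ * besselK ν (a * x)
      = 2 ^ (γ - 1) / a ^ (γ + 1) *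
          Real.Gamma ((1 + γ + ν) / 2) * Real.Gamma ((1 + γ - ν) / 2) := by
  have hq : (-1 : ℝ) < γ + ν := by linarith
  have hA : 0 < (1 + γ - ν) / 2 := by linarith
  set g : ℝ → ℝ → ℝ := fun t x =>
    (x ^ γ * (1 / 2 * (a * x / 2) ^ ν)) *
      (t ^ (-ν - 1) * Real.exp (-t - (a * x) ^ 2 / (4 * t))) with hg_def
  set C : ℝ := 2 ^ (γ - 1) / a ^ (γ + 1) * Real.Gamma ((1 + γ + ν) / 2) with hC_def
  -- pointwise factorization
  have key : ∀ t ∈ Set.Ioi (0:ℝ), ∀ x ∈ Set.Ioi (0:ℝ),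
      g t x = (1 / 2 * (a / 2) ^ ν * (t ^ (-ν - 1) * Real.exp (-t))) *
        (x ^ (γ + ν) * Real.exp (-(a ^ 2 / (4 * t)) * x ^ 2)) := by
    intro t ht x hx
    have htt : (0:ℝ) < t := ht
    have hxx : (0:ℝ) < x := hx
    have e1 : (a * x / 2 : ℝ) ^ ν = (a / 2) ^ ν * x ^ ν := by
      rw [show a * x / 2 = (a / 2) * x by ring, Real.mul_rpow (by positivity) hxx.le]
    have e3 : Real.exp (-t - (a * x) ^ 2 / (4 * t))
        = Real.exp (-t) * Real.exp (-(a ^ 2 / (4 * t)) * x ^ 2) := by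
      rw [← Real.exp_add]; congr 1; field_simp; ring
    have e2 : x ^ γ * x ^ ν = x ^ (γ + ν) := (Real.rpow_add hxx γ ν).symm
    simp only [hg_def]
    rw [e1, e3, ← e2]; ring
  -- inner integral (over x, for fixed t)
  have hinner : ∀ t ∈ Set.Ioi (0:ℝ),
      (∫ x in Set.Ioi (0:ℝ),
          x ^ (γ + ν) * Real.exp (-(a ^ 2 / (4 * t)) * x ^ 2))
        = (a ^ 2 / (4 * t)) ^ (-(γ + ν + 1) / 2) * (1 / 2) *
            Real.Gamma ((γ + ν + 1) / 2) := by
    intro t ht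
    have htt : (0:ℝ) < t := ht
    have hb : 0 < a ^ 2 / (4 * t) := by positivity
    have := integral_rpow_mul_exp_neg_mul_rpow (two_pos) hq hb
    rw [← this]
    refine setIntegral_congr_fun measurableSet_Ioi (fun x hx => ?_)
    rw [show ((2:ℝ)) = ((2:ℕ):ℝ) by norm_num, Real.rpow_natCast]
  -- the x-integral of g t
  have hinner_g : ∀ t ∈ Set.Ioi (0:ℝ),
      (∫ x in Set.Ioi (0:ℝ), g t x)
        = C * (Real.exp (-t) * t ^ ((1 + γ - ν) / 2 - 1)) := by
    intro t ht
    have htt : (0:ℝ) < t := ht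
    rw [setIntegral_congr_fun measurableSet_Ioi (key t ht), integral_const_mul,
      hinner t ht]
    have ea : a ^ (-(γ + ν + 1)) = (a ^ (γ + 1))⁻¹ * (a ^ ν)⁻¹ := by
      rw [← Real.rpow_neg ha.le, ← Real.rpow_neg ha.le, ← Real.rpow_add ha]
      congr 1; ring
    have ediv : (a ^ 2 / (4 * t)) ^ (-(γ + ν + 1) / 2)
        = a ^ (-(γ + ν + 1)) * ((2:ℝ) ^ (γ + ν + 1) * t ^ ((γ + ν + 1) / 2)) := by
      rw [Real.div_rpow (by positivity) (by positivity),
        show (4:ℝ) * t = (2:ℝ) ^ (2:ℕ) * t by norm_num,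
        Real.mul_rpow (by positivity) htt.le,
        ← Real.rpow_natCast a 2, ← Real.rpow_natCast 2 2,
        ← Real.rpow_mul ha.le, ← Real.rpow_mul (by norm_num : (0:ℝ) ≤ 2)]
      rw [show ((2:ℕ):ℝ) * (-(γ + ν + 1) / 2) = -(γ + ν + 1) by push_cast; ring,
        show -(γ + ν + 1) / 2 = -((γ + ν + 1) / 2) by ring,
        Real.rpow_neg (by norm_num : (0:ℝ) ≤ 2), Real.rpow_neg htt.le,
        div_eq_mul_inv, mul_inv, inv_inv, inv_inv]
    have e2 : (2:ℝ) ^ (γ + ν + 1) = 2 ^ ν * 2 ^ (γ - 1) * 4 := by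
      rw [show (4:ℝ) = (2:ℝ) ^ ((2:ℕ):ℝ) by rw [Real.rpow_natCast]; norm_num,
        ← Real.rpow_add two_pos, ← Real.rpow_add two_pos]
      congr 1; push_cast; ring
    have et1 : t ^ ((γ + ν + 1) / 2) = t ^ ((1 + γ - ν) / 2 - 1) * t ^ (ν + 1) := by
      rw [← Real.rpow_add htt]; congr 1; ring
    have et2 : t ^ (-ν - 1) = (t ^ (ν + 1))⁻¹ := by
      rw [← Real.rpow_neg htt.le]; congr 1; ring
    have eaν : (a / 2 : ℝ) ^ ν = a ^ ν / 2 ^ ν := by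
      rw [Real.div_rpow ha.le (by norm_num : (0:ℝ) ≤ 2)]
    have hΓ : Real.Gamma ((γ + ν + 1) / 2) = Real.Gamma ((1 + γ + ν) / 2) := by
      congr 1; ring
    rw [ediv, ea, e2, et1, et2, eaν, hΓ, hC_def]
    have h2ν : (2:ℝ) ^ ν ≠ 0 := by positivity
    have haν : (a:ℝ) ^ ν ≠ 0 := by positivity
    have haγ : (a:ℝ) ^ (γ + 1) ≠ 0 := by positivity
    have htν : (t:ℝ) ^ (ν + 1) ≠ 0 := by positivity
    field_simp
    ring
  -- integrability on the product space
  have hmeas : AEStronglyMeasurable (Function.uncurry g)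
      ((volume.restrict (Set.Ioi (0:ℝ))).prod (volume.restrict (Set.Ioi (0:ℝ)))) := by
    rw [Measure.prod_restrict]
    refine ContinuousOn.aestronglyMeasurable ?_ (measurableSet_Ioi.prod measurableSet_Ioi)
    have hc1 : ContinuousOn (fun p : ℝ × ℝ => p.2 ^ γ)
        (Set.Ioi (0:ℝ) ×ˢ Set.Ioi (0:ℝ)) :=
      ContinuousOn.rpow_const continuous_snd.continuousOn
        fun p hp => Or.inl (ne_of_gt hp.2)
    have hc2 : ContinuousOn (fun p : ℝ × ℝ => (a * p.2 / 2) ^ ν)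
        (Set.Ioi (0:ℝ) ×ˢ Set.Ioi (0:ℝ)) :=
      ContinuousOn.rpow_const ((continuous_const.mul continuous_snd).div_const 2).continuousOn
        fun p hp => Or.inl (by have := hp.2; simp only [Set.mem_Ioi] at this; positivity)
    have hc3 : ContinuousOn (fun p : ℝ × ℝ => p.1 ^ (-ν - 1))
        (Set.Ioi (0:ℝ) ×ˢ Set.Ioi (0:ℝ)) :=
      ContinuousOn.rpow_const continuous_fst.continuousOn
        fun p hp => Or.inl (ne_of_gt hp.1)
    have hc4 : ContinuousOn
        (fun p : ℝ × ℝ => Real.exp (-p.1 - (a * p.2) ^ 2 / (4 * p.1)))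
        (Set.Ioi (0:ℝ) ×ˢ Set.Ioi (0:ℝ)) := by
      refine ContinuousOn.rexp ?_
      refine ContinuousOn.sub continuous_fst.neg.continuousOn ?_
      refine ContinuousOn.div
        (((continuous_const.mul continuous_snd).pow 2).continuousOn)
        ((continuous_const.mul continuous_fst).continuousOn)
        fun p hp => ?_
      have := hp.1; simp only [Set.mem_Ioi] at this; positivity
    exact ((hc1.mul (hc2.const_smul (1/2 : ℝ))).mul (hc3.mul hc4)).congr
      fun p hp => by simp only [hg_def, Function.uncurry, Pi.mul_apply, Pi.smul_apply, smul_eq_mul]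
  have hInt : Integrable (Function.uncurry g)
      ((volume.restrict (Set.Ioi (0:ℝ))).prod (volume.restrict (Set.Ioi (0:ℝ)))) := by
    rw [MeasureTheory.integrable_prod_iff hmeas]
    constructor
    · filter_upwards [ae_restrict_mem measurableSet_Ioi] with t ht
      have htt : (0:ℝ) < t := ht
      have hb : 0 < a ^ 2 / (4 * t) := by positivity
      exact IntegrableOn.congr_fun
        ((integrableOn_rpow_mul_exp_neg_mul_sq hb hq).const_mul
          (1 / 2 * (a / 2) ^ ν * (t ^ (-ν - 1) * Real.exp (-t))))
        (fun x hx => (key t ht x hx).symm) measurableSet_Ioi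
    · refine IntegrableOn.congr_fun
        ((Real.GammaIntegral_convergent hA).const_mul C)
        (fun t ht => ?_) measurableSet_Ioi
      have hnorm : (fun x => ‖g t x‖) =ᵐ[volume.restrict (Set.Ioi (0:ℝ))] g t := by
        filter_upwards [ae_restrict_mem measurableSet_Ioi] with x hx
        have hxx : (0:ℝ) < x := hx
        have htt : (0:ℝ) < t := ht
        refine Real.norm_of_nonneg ?_
        simp only [hg_def]
        positivity
      calc C * (Real.exp (-t) * t ^ ((1 + γ - ν) / 2 - 1))
          = ∫ x in Set.Ioi (0:ℝ), g t x := (hinner_g t ht).symm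
        _ = ∫ x in Set.Ioi (0:ℝ), ‖g t x‖ := (integral_congr_ae hnorm).symm
  -- main computation
  calc ∫ x in Set.Ioi (0 : ℝ), x ^ γ * besselK ν (a * x)
      = ∫ x in Set.Ioi (0:ℝ), ∫ t in Set.Ioi (0:ℝ), g t x := by
        refine setIntegral_congr_fun measurableSet_Ioi (fun x hx => ?_)
        simp only [besselK, hg_def]
        rw [MeasureTheory.integral_const_mul]
        ring
    _ = ∫ t in Set.Ioi (0:ℝ), ∫ x in Set.Ioi (0:ℝ), g t x :=
        (MeasureTheory.integral_integral_swap hInt).symm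
    _ = ∫ t in Set.Ioi (0:ℝ), C * (Real.exp (-t) * t ^ ((1 + γ - ν) / 2 - 1)) :=
        setIntegral_congr_fun measurableSet_Ioi hinner_g
    _ = C * ∫ t in Set.Ioi (0:ℝ), t ^ ((1 + γ - ν) / 2 - 1) * Real.exp (-(1 * t)) := by
        rw [MeasureTheory.integral_const_mul]
        congr 1
        refine setIntegral_congr_fun measurableSet_Ioi (fun t ht => ?_)
        rw [one_mul]; ring
    _ = C * ((1 / 1) ^ ((1 + γ - ν) / 2) * Real.Gamma ((1 + γ - ν) / 2)) := by
        rw [integral_rpow_mul_exp_neg_mul_Ioi hA one_pos]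
    _ = 2 ^ (γ - 1) / a ^ (γ + 1) *
          Real.Gamma ((1 + γ + ν) / 2) * Real.Gamma ((1 + γ - ν) / 2) := by
        rw [hC_def]; norm_num
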